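/- Let H be a connected finite simple graph and let a ≠ b be vertices of H satisfying ecc_H(a) = ecc_H(b) = dist_H(a,b) = diam(H). Let K be the simple graph obtained from two disjoint copies H₁ and H₂ of H by identifying the copy of b in H₁ with the copy of a in H₂, and call the identified vertex c. Then K is connected, ecc_K(c) = diam(H), every vertex x ≠ c of K satisfies ecc_K(x) > diam(H), and consequently radius(K) = diam(H) and c is the unique vertex of K of minimum eccentricity (the unique center of K). -/

import Mathlib

/-- The eccentricity of a vertex `u` in a finite simple graph: the maximum of the
distances from `u` to the other vertices. -/
noncomputable def gecc {α : Type} [Fintype α] (H : SimpleGraph α) (u : α) : ℕ :=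
  Finset.univ.sup fun v => H.dist u v

/-- The diameter of a finite simple graph: the maximum distance between two vertices. -/
noncomputable def gdiam {α : Type} [Fintype α] (H : SimpleGraph α) : ℕ :=
  Finset.univ.sup fun p : α × α => H.dist p.1 p.2

/-- The radius of a finite simple graph: the minimum eccentricity of a vertex. -/
noncomputable def gradius {α : Type} [Fintype α] (H : SimpleGraph α) : ℕ :=
  ⨅ u, gecc H u

/-- The graph obtained from two disjoint copies of `H` by identifying the vertex `b` of the
first copy with the vertex `a` of the second copy.  The first copy is `Sum.inl`, the second
copy is `Sum.inr` (omitting `a`, which is identified with `Sum.inl b`); the identified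
vertex `c` is `Sum.inl b`. -/
def glueGraph {α : Type} [DecidableEq α] (H : SimpleGraph α) (b a : α) :
    SimpleGraph (α ⊕ {x : α // x ≠ a}) :=
  SimpleGraph.fromRel fun x y =>
    (∃ u v : α, H.Adj u v ∧ x = Sum.inl u ∧ y = Sum.inl v) ∨
    (∃ u v : {x : α // x ≠ a}, H.Adj u.1 v.1 ∧ x = Sum.inr u ∧ y = Sum.inr v) ∨
    (∃ v : {x : α // x ≠ a}, H.Adj a v.1 ∧ x = Sum.inl b ∧ y = Sum.inr v)

namespace GlueAux

variable {α : Type} [DecidableEq α]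

/-- the candidate distance function on the glued graph -/
noncomputable def D (H : SimpleGraph α) (b a : α) :
    (α ⊕ {x : α // x ≠ a}) → (α ⊕ {x : α // x ≠ a}) → ℕ
  | Sum.inl u, Sum.inl v => H.dist u v
  | Sum.inl u, Sum.inr v => H.dist u b + H.dist a v.1
  | Sum.inr u, Sum.inl v => H.dist a u.1 + H.dist v b
  | Sum.inr u, Sum.inr v => H.dist u.1 v.1

/-- first copy hom -/
def f1 (H : SimpleGraph α) (b a : α) : H →g glueGraph H b a where
  toFun := Sum.inl
  map_rel' := by
    intro u v h
    rw [glueGraph, SimpleGraph.fromRel_adj]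
    exact ⟨by simpa using h.ne, Or.inl (Or.inl ⟨u, v, h, rfl, rfl⟩)⟩

/-- second copy map -/
def g2 (b a : α) (u : α) : α ⊕ {x : α // x ≠ a} :=
  if h : u = a then Sum.inl b else Sum.inr ⟨u, h⟩

lemma g2_a (b a : α) : g2 b a a = Sum.inl b := dif_pos rfl

lemma g2_ne (b a : α) {u : α} (h : u ≠ a) : g2 b a u = Sum.inr ⟨u, h⟩ := dif_neg h

/-- second copy hom -/
def f2 (H : SimpleGraph α) (b a : α) : H →g glueGraph H b a where
  toFun := g2 b a
  map_rel' := by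
    intro u v h
    show (glueGraph H b a).Adj (g2 b a u) (g2 b a v)
    rw [glueGraph, SimpleGraph.fromRel_adj]
    by_cases hu : u = a
    · have hv : v ≠ a := fun hv' => H.loopless.irrefl a (by rw [hu, hv'] at h; exact h)
      rw [hu, g2_a, g2_ne b a hv]
      exact ⟨by simp, Or.inl (Or.inr (Or.inr ⟨⟨v, hv⟩, hu ▸ h, rfl, rfl⟩))⟩
    · by_cases hv : v = a
      · rw [hv, g2_a, g2_ne b a hu]
        exact ⟨by simp, Or.inr (Or.inr (Or.inr ⟨⟨u, hu⟩, (hv ▸ h).symm, rfl, rfl⟩))⟩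
      · rw [g2_ne b a hu, g2_ne b a hv]
        refine ⟨?_, Or.inl (Or.inr (Or.inl ⟨⟨u, hu⟩, ⟨v, hv⟩, h, rfl, rfl⟩))⟩
        simp only [ne_eq, Sum.inr.injEq, Subtype.mk.injEq]
        exact h.ne

variable (H : SimpleGraph α) (b a : α)

lemma reach_inl (hconn : H.Connected) (u : α) :
    (glueGraph H b a).Reachable (Sum.inl b) (Sum.inl u) :=
  ⟨((hconn b u).some).map (f1 H b a)⟩

lemma reach_inr (hconn : H.Connected) (v : {x : α // x ≠ a}) :
    (glueGraph H b a).Reachable (Sum.inl b) (Sum.inr v) := by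
  refine ⟨(((hconn a v.1).some).map (f2 H b a)).copy ?_ ?_⟩
  · exact g2_a b a
  · exact (g2_ne b a v.2).trans (by simp)

lemma glue_connected (hconn : H.Connected) : (glueGraph H b a).Connected := by
  rw [SimpleGraph.connected_iff]
  refine ⟨fun x y => ?_, ⟨Sum.inl b⟩⟩
  have h : ∀ z, (glueGraph H b a).Reachable (Sum.inl b) z := by
    rintro (u | v)
    · exact reach_inl H b a hconn u
    · exact reach_inr H b a hconn v
  exact (h x).symm.trans (h y)

/-- upper bound: dist in glue graph ≤ D -/
lemma dist_le_D (hconn : H.Connected) (x y : α ⊕ {x : α // x ≠ a}) :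
    (glueGraph H b a).dist x y ≤ D H b a x y := by
  have walk1 : ∀ u v : α, ∃ w : (glueGraph H b a).Walk (Sum.inl u) (Sum.inl v),
      w.length = H.dist u v := by
    intro u v
    obtain ⟨p, hp⟩ := hconn.exists_walk_length_eq_dist u v
    exact ⟨p.map (f1 H b a), (SimpleGraph.Walk.length_map _ _).trans hp⟩
  have walk2 : ∀ (u v : α), ∃ w : (glueGraph H b a).Walk (g2 b a u) (g2 b a v),
      w.length = H.dist u v := by
    intro u v
    obtain ⟨p, hp⟩ := hconn.exists_walk_length_eq_dist u v
    exact ⟨p.map (f2 H b a), (SimpleGraph.Walk.length_map _ _).trans hp⟩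
  obtain (u | u) := x <;> obtain (v | v) := y
  · obtain ⟨w, hw⟩ := walk1 u v
    calc (glueGraph H b a).dist _ _ ≤ w.length := SimpleGraph.dist_le w
    _ = _ := hw
  · -- inl u, inr v
    obtain ⟨w1, hw1⟩ := walk1 u b
    obtain ⟨w2, hw2⟩ := walk2 a v.1
    calc (glueGraph H b a).dist (Sum.inl u) (Sum.inr v)
        ≤ (w1.append (w2.copy (g2_a b a) ((g2_ne b a v.2).trans (by simp)))).length :=
          SimpleGraph.dist_le _
      _ = H.dist u b + H.dist a v.1 := by
          rw [SimpleGraph.Walk.length_append, SimpleGraph.Walk.length_copy, hw1, hw2]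
  · -- inr u, inl v
    obtain ⟨w2, hw2⟩ := walk2 u.1 a
    obtain ⟨w1, hw1⟩ := walk1 b v
    calc (glueGraph H b a).dist (Sum.inr u) (Sum.inl v)
        ≤ ((w2.copy ((g2_ne b a u.2).trans (by simp)) (g2_a b a)).append w1).length :=
          SimpleGraph.dist_le _
      _ = H.dist a u.1 + H.dist v b := by
          rw [SimpleGraph.Walk.length_append, SimpleGraph.Walk.length_copy, hw1, hw2,
            SimpleGraph.dist_comm, SimpleGraph.dist_comm (u := b)]
  · obtain ⟨w, hw⟩ := walk2 u.1 v.1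
    calc (glueGraph H b a).dist (Sum.inr u) (Sum.inr v)
        ≤ (w.copy ((g2_ne b a u.2).trans (by simp))
            ((g2_ne b a v.2).trans (by simp))).length := SimpleGraph.dist_le _
      _ = H.dist u.1 v.1 := by rw [SimpleGraph.Walk.length_copy, hw]

lemma D_adj (hconn : H.Connected) {x y : α ⊕ {x : α // x ≠ a}}
    (h : (glueGraph H b a).Adj x y) : D H b a x y ≤ 1 := by
  have hd1 : ∀ u v : α, H.Adj u v → H.dist u v ≤ 1 := by
    intro u v h
    have := SimpleGraph.dist_le h.toWalk
    simpa using this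
  rw [glueGraph, SimpleGraph.fromRel_adj] at h
  obtain ⟨-, h | h⟩ := h <;>
  · rcases h with ⟨u, v, h, rfl, rfl⟩ | ⟨u, v, h, rfl, rfl⟩ | ⟨v, h, rfl, rfl⟩ <;>
      simp only [D, SimpleGraph.dist_self, Nat.zero_add, Nat.add_zero] <;>
      first
        | exact hd1 _ _ h
        | exact hd1 _ _ h.symm

lemma D_triangle (hconn : H.Connected) (x y z : α ⊕ {x : α // x ≠ a}) :
    D H b a x z ≤ D H b a x y + D H b a y z := by
  have T : ∀ u v w : α, H.dist u w ≤ H.dist u v + H.dist v w := fun _ _ _ =>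
    hconn.dist_triangle
  have C : ∀ u v : α, H.dist u v = H.dist v u := fun _ _ => SimpleGraph.dist_comm
  obtain (u | u) := x <;> obtain (v | v) := y <;> obtain (w | w) := z <;>
    simp only [D]
  · exact T u v w
  · have := T u v b; omega
  · have h1 := T u b w; have h2 := C b w; omega
  · have h1 := T a v.1 w.1; omega
  · have h1 := T w v b; have h2 := C w v; omega
  · have h1 := T u.1 a w.1; have h2 := C a u.1; omega
  · have h1 := T a v.1 u.1; have h2 := C u.1 v.1; omega
  · exact T u.1 v.1 w.1

lemma D_le_walk (hconn : H.Connected) {x y : α ⊕ {x : α // x ≠ a}}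
    (w : (glueGraph H b a).Walk x y) : D H b a x y ≤ w.length := by
  induction w with
  | nil =>
    rename_i u
    rcases u with u | u <;> simp [D, SimpleGraph.dist_self]
  | cons h p ih =>
    rename_i u v w
    refine le_trans (D_triangle H b a hconn u v w) ?_
    have h2 := Nat.add_le_add (D_adj H b a hconn h) ih
    simpa [Nat.add_comm] using h2

lemma dist_eq_D (hconn : H.Connected) (x y : α ⊕ {x : α // x ≠ a}) :
    (glueGraph H b a).dist x y = D H b a x y := by
  refine le_antisymm (dist_le_D H b a hconn x y) ?_
  obtain ⟨w, hw⟩ := (glue_connected H b a hconn).exists_walk_length_eq_dist x y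
  calc D H b a x y ≤ w.length := D_le_walk H b a hconn w
  _ = _ := hw

end GlueAux
/-- let `H` be a connected finite simple graph and `a ≠ b` vertices with
`ecc_H(a) = ecc_H(b) = dist_H(a,b) = diam(H)`.  Let `K` be obtained from two disjoint
copies of `H` by identifying the `b` of the first copy with the `a` of the second copy,
and let `c` be the identified vertex.  Then `K` is connected, `ecc_K(c) = diam(H)`, every
vertex `x ≠ c` of `K` has `ecc_K(x) > diam(H)`, `radius(K) = diam(H)`, and `c` is the
unique vertex of `K` of minimum eccentricity. -/
theorem stmt_7 {α : Type} [Fintype α] [DecidableEq α] (H : SimpleGraph α)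
    (hconn : H.Connected) (a b : α) (hab : a ≠ b)
    (hea : gecc H a = gdiam H) (heb : gecc H b = gdiam H)
    (hd : H.dist a b = gdiam H) :
    (glueGraph H b a).Connected ∧
      gecc (glueGraph H b a) (Sum.inl b) = gdiam H ∧
      (∀ x : α ⊕ {x : α // x ≠ a}, x ≠ Sum.inl b →
        gdiam H < gecc (glueGraph H b a) x) ∧
      gradius (glueGraph H b a) = gdiam H ∧
      (∀ x : α ⊕ {x : α // x ≠ a},
        gecc (glueGraph H b a) x = gradius (glueGraph H b a) → x = Sum.inl b) := by
  have hKconn := GlueAux.glue_connected H b a hconn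
  have hDK : ∀ x y, (glueGraph H b a).dist x y = GlueAux.D H b a x y :=
    GlueAux.dist_eq_D H b a hconn
  have hdpos : 0 < gdiam H := by
    rw [← hd]; exact hconn.pos_dist_of_ne hab
  have hle_ecc : ∀ u v : α, H.dist u v ≤ gecc H u := fun u v =>
    Finset.le_sup (Finset.mem_univ v)
  have hecc_c : gecc (glueGraph H b a) (Sum.inl b) = gdiam H := by
    apply le_antisymm
    · apply Finset.sup_le
      rintro (v | v) -
      · rw [hDK]
        simp only [GlueAux.D]
        exact heb ▸ hle_ecc b v
      · rw [hDK]
        simp only [GlueAux.D]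
        rw [SimpleGraph.dist_self, Nat.zero_add]
        exact hea ▸ hle_ecc a v.1
    · calc gdiam H = H.dist b a := by rw [SimpleGraph.dist_comm, hd]
      _ = (glueGraph H b a).dist (Sum.inl b) (Sum.inl a) := by
          rw [hDK]; simp only [GlueAux.D]
      _ ≤ _ := Finset.le_sup (Finset.mem_univ (Sum.inl a))
  have hstrict : ∀ x : α ⊕ {x : α // x ≠ a}, x ≠ Sum.inl b →
      gdiam H < gecc (glueGraph H b a) x := by
    rintro (u | v) hx
    · have hub : u ≠ b := fun h => hx (by rw [h])
      obtain ⟨v, -, hv⟩ := Finset.univ.exists_mem_eq_sup ⟨a, Finset.mem_univ a⟩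
        (fun v => H.dist a v)
      have hv' : H.dist a v = gdiam H := by rw [← hv]; exact hea
      have hva : v ≠ a := by
        intro h
        rw [h, SimpleGraph.dist_self] at hv'
        omega
      have hkey : (glueGraph H b a).dist (Sum.inl u) (Sum.inr ⟨v, hva⟩)
          = H.dist u b + gdiam H := by
        rw [hDK]; simp only [GlueAux.D]; rw [hv']
      have hub' : 0 < H.dist u b := hconn.pos_dist_of_ne hub
      calc gdiam H < H.dist u b + gdiam H := by omega
        _ = (glueGraph H b a).dist (Sum.inl u) (Sum.inr ⟨v, hva⟩) := hkey.symm
        _ ≤ _ := Finset.le_sup (Finset.mem_univ (Sum.inr (⟨v, hva⟩ : {x : α // x ≠ a})))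
    · obtain ⟨w, -, hw⟩ := Finset.univ.exists_mem_eq_sup ⟨a, Finset.mem_univ a⟩
        (fun w => H.dist b w)
      have hw' : H.dist b w = gdiam H := by rw [← hw]; exact heb
      have hva : 0 < H.dist a v.1 := hconn.pos_dist_of_ne (Ne.symm v.2)
      have hkey : (glueGraph H b a).dist (Sum.inr v) (Sum.inl w)
          = H.dist a v.1 + gdiam H := by
        rw [hDK]; simp only [GlueAux.D]
        rw [SimpleGraph.dist_comm (u := w), hw']
      calc gdiam H < H.dist a v.1 + gdiam H := by omega
        _ = (glueGraph H b a).dist (Sum.inr v) (Sum.inl w) := hkey.symm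
        _ ≤ _ := Finset.le_sup (Finset.mem_univ (Sum.inl w))
  have hne : Nonempty (α ⊕ {x : α // x ≠ a}) := ⟨Sum.inl a⟩
  have hrad : gradius (glueGraph H b a) = gdiam H := by
    apply le_antisymm
    · calc gradius (glueGraph H b a) ≤ gecc (glueGraph H b a) (Sum.inl b) :=
          ciInf_le' _ _
        _ = gdiam H := hecc_c
    · apply le_ciInf
      intro x
      by_cases hx : x = Sum.inl b
      · rw [hx, hecc_c]
      · exact (hstrict x hx).le
  refine ⟨hKconn, hecc_c, hstrict, hrad, ?_⟩
  intro x hx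
  by_contra h
  have h1 := hstrict x h
  rw [hx, hrad] at h1
  omega
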